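/- In the graph G_k, for any two distinct vertices u = (u_x,u_y) and v = (v_x,v_y) in the clique B, exactly |u_x − v_x| vertices of A are adjacent to exactly one of u and v, and exactly |u_y − v_y| vertices of C are adjacent to exactly one of u and v; consequently sd(u,v) ≥ |u_x − v_x| + |u_y − v_y|. -/

import Mathlib

open Finset
open scoped Classical

variable {V : Type*}

/-- `sdPair G x y`: the number of vertices other than `x, y` adjacent to exactly
one of `x` and `y`. -/
noncomputable def sdPair [Fintype V] (G : SimpleGraph V) (x y : V) : ℕ :=
  (univ.filter fun z => z ≠ x ∧ z ≠ y ∧ ¬(G.Adj z x ↔ G.Adj z y)).card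

/-- The set `B = ⋃_{i,j ∈ [k]} B_{ij} ⊆ ℤ²`, where
`B₁₁ = {(pk − q, qk + p) : 1 ≤ p ≤ k, 0 ≤ q ≤ k − 1}` and
`B_{ij} = B₁₁ + ((i−1)k², (j−1)k²)`. -/
noncomputable def Bset (k : ℕ) : Finset (ℤ × ℤ) :=
  ((Finset.Icc (1 : ℤ) k ×ˢ Finset.Icc (0 : ℤ) ((k : ℤ) - 1)) ×ˢ
      (Finset.Icc (1 : ℤ) k ×ˢ Finset.Icc (1 : ℤ) k)).image
    fun x => (x.1.1 * k - x.1.2 + (x.2.1 - 1) * (k : ℤ) ^ 2,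
              x.1.2 * k + x.1.1 + (x.2.2 - 1) * (k : ℤ) ^ 2)

/-- Vertices of the graph `G_k`: the clique `A = {a_1, …, a_{k³}}`, the clique `B`
(one vertex for each point of `Bset k`), and the clique `C = {c_1, …, c_{k³}}`.
Here `Fin (k^3)` index `i` represents `a_{i+1}` (resp. `c_{i+1}`). -/
abbrev GkVtx (k : ℕ) := Fin (k ^ 3) ⊕ ({ b : ℤ × ℤ // b ∈ Bset k } ⊕ Fin (k ^ 3))

/-- The underlying relation of `G_k`: `A`, `B`, `C` are cliques, `a_i` is adjacent
to `(b_x, b_y) ∈ B` iff `i < b_x`, `(b_x, b_y)` is adjacent to `c_j` iff `b_y < j`,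
and there are no `A`–`C` edges. -/
def GkRel (k : ℕ) : GkVtx k → GkVtx k → Prop
  | Sum.inl i, Sum.inl j => i ≠ j
  | Sum.inl i, Sum.inr (Sum.inl b) => (i : ℤ) + 1 < b.1.1
  | Sum.inr (Sum.inl b), Sum.inr (Sum.inl b') => b ≠ b'
  | Sum.inr (Sum.inl b), Sum.inr (Sum.inr j) => b.1.2 < (j : ℤ) + 1
  | Sum.inr (Sum.inr i), Sum.inr (Sum.inr j) => i ≠ j
  | _, _ => False

/-- The graph `G_k`. -/
def Gk (k : ℕ) : SimpleGraph (GkVtx k) := SimpleGraph.fromRel (GkRel k)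


lemma count_le (n : ℕ) (a b : ℤ) (ha1 : 1 ≤ a) (hb2 : b ≤ n + 1) (hab : a ≤ b) :
    ((univ.filter fun i : Fin n => ¬(((i:ℤ)+1 < a) ↔ ((i:ℤ)+1 < b))).card : ℤ) = b - a := by
  have h : (univ.filter fun i : Fin n => ¬(((i:ℤ)+1 < a) ↔ ((i:ℤ)+1 < b))).card
      = (Finset.Ico a b).card := by
    refine Finset.card_bij (fun i _ => (i:ℤ)+1) ?_ ?_ ?_
    · intro i hi
      simp only [mem_filter, mem_univ, true_and] at hi
      simp only [mem_Ico]
      omega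
    · intro i _ j _ h
      have : (i : ℤ) = (j : ℤ) := by omega
      exact Fin.ext (by exact_mod_cast this)
    · intro x hx
      simp only [mem_Ico] at hx
      have hn : (x - 1).toNat < n := by omega
      refine ⟨⟨(x-1).toNat, hn⟩, ?_, ?_⟩
      · simp only [mem_filter, mem_univ, true_and]
        show ¬((((x-1).toNat : ℤ) + 1 < a) ↔ (((x-1).toNat : ℤ) + 1 < b))
        omega
      · show ((x-1).toNat : ℤ) + 1 = x
        omega
  rw [h, Int.card_Ico]
  omega

lemma count_threshold (n : ℕ) (a b : ℤ) (ha1 : 1 ≤ a) (ha2 : a ≤ n + 1) (hb1 : 1 ≤ b)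
    (hb2 : b ≤ n + 1) :
    ((univ.filter fun i : Fin n => ¬(((i:ℤ)+1 < a) ↔ ((i:ℤ)+1 < b))).card : ℤ) = |a - b| := by
  rcases le_total a b with h | h
  · rw [abs_of_nonpos (by omega), neg_sub]
    exact count_le n a b ha1 hb2 h
  · rw [abs_of_nonneg (by omega)]
    rw [Finset.filter_congr (fun i _ => by tauto :
      ∀ i ∈ (univ : Finset (Fin n)), (¬(((i:ℤ)+1 < a) ↔ ((i:ℤ)+1 < b))) ↔
        (¬(((i:ℤ)+1 < b) ↔ ((i:ℤ)+1 < a))))]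
    exact count_le n b a hb1 ha2 h


lemma Bset_bounds {k : ℕ} {b : ℤ × ℤ} (hb : b ∈ Bset k) :
    1 ≤ b.1 ∧ b.1 ≤ (k:ℤ)^3 ∧ 1 ≤ b.2 ∧ b.2 ≤ (k:ℤ)^3 := by
  simp only [Bset, mem_image, mem_product, mem_Icc] at hb
  obtain ⟨⟨⟨p,q⟩,⟨i,j⟩⟩, ⟨⟨⟨hp1,hp2⟩,⟨hq1,hq2⟩⟩,⟨hi1,hi2⟩,⟨hj1,hj2⟩⟩, rfl⟩ := hb
  dsimp only at *
  have hK : (0:ℤ) ≤ (k:ℤ) := by positivity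
  have hK2 : (0:ℤ) ≤ (k:ℤ)^2 := by positivity
  have f1 : p*(k:ℤ) ≤ (k:ℤ)*(k:ℤ) := mul_le_mul_of_nonneg_right hp2 hK
  have f2 : 1*(k:ℤ) ≤ p*(k:ℤ) := mul_le_mul_of_nonneg_right hp1 hK
  have f3 : 0*(k:ℤ)^2 ≤ (i-1)*(k:ℤ)^2 := mul_le_mul_of_nonneg_right (by omega) hK2
  have f4 : (i-1)*(k:ℤ)^2 ≤ ((k:ℤ)-1)*(k:ℤ)^2 := mul_le_mul_of_nonneg_right (by omega) hK2
  have f5 : q*(k:ℤ) ≤ ((k:ℤ)-1)*(k:ℤ) := mul_le_mul_of_nonneg_right hq2 hK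
  have f6 : 0*(k:ℤ) ≤ q*(k:ℤ) := mul_le_mul_of_nonneg_right hq1 hK
  have f7 : 0*(k:ℤ)^2 ≤ (j-1)*(k:ℤ)^2 := mul_le_mul_of_nonneg_right (by omega) hK2
  have f8 : (j-1)*(k:ℤ)^2 ≤ ((k:ℤ)-1)*(k:ℤ)^2 := mul_le_mul_of_nonneg_right (by omega) hK2
  have hr1 : (k:ℤ)*(k:ℤ) + ((k:ℤ)-1)*(k:ℤ)^2 = (k:ℤ)^3 := by ring
  have hr2 : ((k:ℤ)-1)*(k:ℤ) + (k:ℤ) + ((k:ℤ)-1)*(k:ℤ)^2 = (k:ℤ)^3 := by ring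
  refine ⟨by linarith, by linarith, by linarith, by linarith⟩

lemma GkAdjA (k : ℕ) (i : Fin (k^3)) (b : { b : ℤ × ℤ // b ∈ Bset k }) :
    (Gk k).Adj (Sum.inl i) (Sum.inr (Sum.inl b)) ↔ (i : ℤ) + 1 < b.1.1 := by
  simp [Gk, SimpleGraph.fromRel_adj, GkRel]

lemma GkAdjC (k : ℕ) (j : Fin (k^3)) (b : { b : ℤ × ℤ // b ∈ Bset k }) :
    (Gk k).Adj (Sum.inr (Sum.inr j)) (Sum.inr (Sum.inl b)) ↔ b.1.2 < (j : ℤ) + 1 := by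
  simp [Gk, SimpleGraph.fromRel_adj, GkRel]

/-- For distinct `u, v` in the clique `B` of `G_k`: exactly `|u_x − v_x|` vertices
of `A` and exactly `|u_y − v_y|` vertices of `C` are adjacent to exactly one of `u`
and `v`; consequently `sd(u,v) ≥ |u_x − v_x| + |u_y − v_y|`. -/
theorem Gk_B_pair_distinguishers (k : ℕ) (hk : 2 ≤ k)
    (u v : { b : ℤ × ℤ // b ∈ Bset k }) (huv : u ≠ v) :
    (((univ.filter fun i : Fin (k ^ 3) =>
        ¬((Gk k).Adj (Sum.inl i) (Sum.inr (Sum.inl u)) ↔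
          (Gk k).Adj (Sum.inl i) (Sum.inr (Sum.inl v)))).card : ℤ)
        = |u.1.1 - v.1.1|) ∧
    (((univ.filter fun j : Fin (k ^ 3) =>
        ¬((Gk k).Adj (Sum.inr (Sum.inr j)) (Sum.inr (Sum.inl u)) ↔
          (Gk k).Adj (Sum.inr (Sum.inr j)) (Sum.inr (Sum.inl v)))).card : ℤ)
        = |u.1.2 - v.1.2|) ∧
    |u.1.1 - v.1.1| + |u.1.2 - v.1.2| ≤
      (sdPair (Gk k) (Sum.inr (Sum.inl u)) (Sum.inr (Sum.inl v)) : ℤ) := by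
  obtain ⟨hux1, hux2, huy1, huy2⟩ := Bset_bounds u.2
  obtain ⟨hvx1, hvx2, hvy1, hvy2⟩ := Bset_bounds v.2
  have hk3 : ((k^3 : ℕ) : ℤ) = (k:ℤ)^3 := by push_cast; ring
  have hA : (((univ.filter fun i : Fin (k ^ 3) =>
      ¬((Gk k).Adj (Sum.inl i) (Sum.inr (Sum.inl u)) ↔
        (Gk k).Adj (Sum.inl i) (Sum.inr (Sum.inl v)))).card : ℤ)) = |u.1.1 - v.1.1| := by
    rw [Finset.filter_congr (fun i _ => by rw [GkAdjA, GkAdjA] :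
      ∀ i ∈ (univ : Finset (Fin (k^3))),
        (¬((Gk k).Adj (Sum.inl i) (Sum.inr (Sum.inl u)) ↔
          (Gk k).Adj (Sum.inl i) (Sum.inr (Sum.inl v)))) ↔
        (¬(((i:ℤ)+1 < u.1.1) ↔ ((i:ℤ)+1 < v.1.1))))]
    exact count_threshold (k^3) u.1.1 v.1.1 hux1 (by rw [hk3]; omega) hvx1 (by rw [hk3]; omega)
  have hC : (((univ.filter fun j : Fin (k ^ 3) =>
      ¬((Gk k).Adj (Sum.inr (Sum.inr j)) (Sum.inr (Sum.inl u)) ↔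
        (Gk k).Adj (Sum.inr (Sum.inr j)) (Sum.inr (Sum.inl v)))).card : ℤ)) = |u.1.2 - v.1.2| := by
    rw [Finset.filter_congr (fun j _ => by rw [GkAdjC, GkAdjC]; omega :
      ∀ j ∈ (univ : Finset (Fin (k^3))),
        (¬((Gk k).Adj (Sum.inr (Sum.inr j)) (Sum.inr (Sum.inl u)) ↔
          (Gk k).Adj (Sum.inr (Sum.inr j)) (Sum.inr (Sum.inl v)))) ↔
        (¬(((j:ℤ)+1 < u.1.2 + 1) ↔ ((j:ℤ)+1 < v.1.2 + 1))))]
    rw [count_threshold (k^3) (u.1.2+1) (v.1.2+1) (by omega) (by rw [hk3]; omega)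
      (by omega) (by rw [hk3]; omega)]
    congr 1; ring
  refine ⟨hA, hC, ?_⟩
  rw [← hA, ← hC]
  set FA := univ.filter fun i : Fin (k ^ 3) =>
      ¬((Gk k).Adj (Sum.inl i) (Sum.inr (Sum.inl u)) ↔
        (Gk k).Adj (Sum.inl i) (Sum.inr (Sum.inl v))) with hFA
  set FC := univ.filter fun j : Fin (k ^ 3) =>
      ¬((Gk k).Adj (Sum.inr (Sum.inr j)) (Sum.inr (Sum.inl u)) ↔
        (Gk k).Adj (Sum.inr (Sum.inr j)) (Sum.inr (Sum.inl v))) with hFC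
  have hsub : FA.image (Sum.inl : Fin (k^3) → GkVtx k) ∪ FC.image (fun j : Fin (k^3) => (Sum.inr (Sum.inr j) : GkVtx k)) ⊆
      univ.filter fun z : GkVtx k => z ≠ Sum.inr (Sum.inl u) ∧ z ≠ Sum.inr (Sum.inl v) ∧
        ¬((Gk k).Adj z (Sum.inr (Sum.inl u)) ↔ (Gk k).Adj z (Sum.inr (Sum.inl v))) := by
    intro z hz
    simp only [mem_union, mem_image, hFA, hFC, mem_filter, mem_univ, true_and] at hz ⊢
    rcases hz with ⟨i, hi, rfl⟩ | ⟨j, hj, rfl⟩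
    · exact ⟨by simp, by simp, hi⟩
    · exact ⟨by simp, by simp, hj⟩
  have hdisj : Disjoint (FA.image (Sum.inl : Fin (k^3) → GkVtx k)) (FC.image (fun j : Fin (k^3) => (Sum.inr (Sum.inr j) : GkVtx k))) := by
    simp only [Finset.disjoint_left, mem_image]
    rintro z ⟨i, _, rfl⟩ ⟨j, _, h⟩
    exact absurd h (by simp)
  have hcard : FA.card + FC.card ≤
      sdPair (Gk k) (Sum.inr (Sum.inl u)) (Sum.inr (Sum.inl v)) := by
    calc FA.card + FC.card
        = (FA.image (Sum.inl : Fin (k^3) → GkVtx k)).card + (FC.image (fun j : Fin (k^3) => (Sum.inr (Sum.inr j) : GkVtx k))).card := by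
          rw [Finset.card_image_of_injective _ Sum.inl_injective,
            Finset.card_image_of_injective _
              (fun a b h => by simpa using h :
                Function.Injective (fun j : Fin (k^3) => (Sum.inr (Sum.inr j) : GkVtx k)))]
      _ = (FA.image (Sum.inl : Fin (k^3) → GkVtx k) ∪ FC.image (fun j : Fin (k^3) => (Sum.inr (Sum.inr j) : GkVtx k))).card :=
          (Finset.card_union_of_disjoint hdisj).symm
      _ ≤ (univ.filter fun z : GkVtx k => z ≠ Sum.inr (Sum.inl u) ∧ z ≠ Sum.inr (Sum.inl v) ∧
            ¬((Gk k).Adj z (Sum.inr (Sum.inl u)) ↔ (Gk k).Adj z (Sum.inr (Sum.inl v)))).card :=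
          Finset.card_le_card hsub
      _ = sdPair (Gk k) (Sum.inr (Sum.inl u)) (Sum.inr (Sum.inl v)) := by
          unfold sdPair
          congr
  exact_mod_cast hcard
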